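/- Let (μ_t)_{t≥0} be WDS ordered with negative means and τ₀ < τ₁ < ⋯ < τ_r nonnegative reals. Define μ^{(τ)}_t = μ_t for t ∉ [τ₀, τ_r], and μ^{(τ)}_t = ((τ_i − t)/(τ_i − τ_{i−1})) μ_{τ_{i−1}} + ((t − τ_{i−1})/(τ_i − τ_{i−1})) μ_{τ_i} for t ∈ [τ_{i−1}, τ_i]. Then (μ^{(τ)}_t)_{t≥0} is WDS ordered. -/

import Mathlib

open MeasureTheory Set Filter Topology

noncomputable def meanM (μ : Measure ℝ) : ℝ := ∫ y, y ∂μ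

noncomputable def rSupE (μ : Measure ℝ) : EReal :=
  sInf ((fun z : ℝ => (z : EReal)) '' {z : ℝ | μ (Ici z) = 0})

noncomputable def psiWds (μ : Measure ℝ) (x : ℝ) : EReal :=
  if (x : EReal) < rSupE μ then
    ((((∫ y in Ici x, y ∂μ) - meanM μ) / (μ (Ici x)).toReal : ℝ) : EReal)
  else ⊤

noncomputable def Kfun (μ : Measure ℝ) (x : ℝ) : ℝ :=
  (∫ y in Ici x, (y - x) ∂μ) - meanM μ

namespace WdsAux

noncomputable def Dfun (μ : Measure ℝ) (x : ℝ) : ℝ := (μ (Ici x)).toReal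

noncomputable def Nfun (μ : Measure ℝ) (x : ℝ) : ℝ := (∫ y in Ici x, y ∂μ) - meanM μ

lemma psi_of_lt {μ : Measure ℝ} {x : ℝ} (h : (x : EReal) < rSupE μ) :
    psiWds μ x = ((Nfun μ x / Dfun μ x : ℝ) : EReal) := if_pos h

lemma psi_of_not_lt {μ : Measure ℝ} {x : ℝ} (h : ¬ (x : EReal) < rSupE μ) :
    psiWds μ x = ⊤ := if_neg h

lemma rSup_le_of_null {μ : Measure ℝ} {x : ℝ} (h : μ (Ici x) = 0) : rSupE μ ≤ (x : EReal) :=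
  sInf_le ⟨x, h, rfl⟩

lemma null_of_lt {μ : Measure ℝ} {x : ℝ} (h : rSupE μ < (x : EReal)) : μ (Ici x) = 0 := by
  obtain ⟨b, ⟨z, hz, rfl⟩, hbx⟩ := sInf_lt_iff.mp h
  exact measure_mono_null (Ici_subset_Ici.mpr (le_of_lt (EReal.coe_lt_coe_iff.mp hbx))) hz

lemma measure_ne_zero_of_lt {μ : Measure ℝ} {x : ℝ} (h : (x : EReal) < rSupE μ) :
    μ (Ici x) ≠ 0 := fun h0 => absurd (rSup_le_of_null h0) (not_le.mpr h)

lemma Dpos {μ : Measure ℝ} [IsProbabilityMeasure μ] {x : ℝ} (h : (x : EReal) < rSupE μ) :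
    0 < Dfun μ x :=
  ENNReal.toReal_pos (measure_ne_zero_of_lt h) (measure_ne_top μ _)

lemma lt_rSup_trans {ρ₁ ρ₂ : Measure ℝ} {x : ℝ} (hle : psiWds ρ₁ x ≤ psiWds ρ₂ x)
    (h2 : (x : EReal) < rSupE ρ₂) : (x : EReal) < rSupE ρ₁ := by
  by_contra h1
  rw [psi_of_not_lt h1, psi_of_lt h2, top_le_iff] at hle
  exact (EReal.coe_ne_top _) hle

lemma cross_of_lt {ρ₁ ρ₂ : Measure ℝ} [IsProbabilityMeasure ρ₁] [IsProbabilityMeasure ρ₂]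
    {x : ℝ} (hle : psiWds ρ₁ x ≤ psiWds ρ₂ x)
    (h1 : (x : EReal) < rSupE ρ₁) (h2 : (x : EReal) < rSupE ρ₂) :
    Nfun ρ₁ x * Dfun ρ₂ x ≤ Nfun ρ₂ x * Dfun ρ₁ x := by
  rw [psi_of_lt h1, psi_of_lt h2, EReal.coe_le_coe_iff] at hle
  have d1 := Dpos (μ := ρ₁) h1
  have d2 := Dpos (μ := ρ₂) h2
  rw [div_le_div_iff₀ d1 d2] at hle
  linarith

lemma iInter_Ici (x : ℝ) : (⋂ n : ℕ, Ici (x - 1 / (n + 1))) = Ici x := by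
  ext y
  simp only [mem_iInter, mem_Ici]
  constructor
  · intro h
    by_contra hy
    push_neg at hy
    obtain ⟨n, hn⟩ := exists_nat_one_div_lt (show (0 : ℝ) < x - y by linarith)
    have := h n
    linarith
  · intro h n
    have : (0 : ℝ) < 1 / ((n : ℝ) + 1) := by positivity
    linarith

lemma antitone_Ici (x : ℝ) : Antitone (fun n : ℕ => Ici (x - 1 / ((n : ℝ) + 1))) := by
  intro n m hnm
  apply Ici_subset_Ici.mpr
  have h1 : (0 : ℝ) < (n : ℝ) + 1 := by positivity
  have h2 : ((n : ℝ) + 1) ≤ ((m : ℝ) + 1) := by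
    have := (Nat.cast_le (α := ℝ)).mpr hnm; linarith
  have := one_div_le_one_div_of_le h1 h2
  linarith

lemma tendsto_D (μ : Measure ℝ) [IsProbabilityMeasure μ] (x : ℝ) :
    Tendsto (fun n : ℕ => Dfun μ (x - 1 / ((n : ℝ) + 1))) atTop (𝓝 (Dfun μ x)) := by
  have h := tendsto_measure_iInter_atTop (μ := μ)
    (s := fun n : ℕ => Ici (x - 1 / ((n : ℝ) + 1)))
    (fun n => measurableSet_Ici.nullMeasurableSet) (antitone_Ici x)
    ⟨0, measure_ne_top μ _⟩
  rw [iInter_Ici] at h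
  exact (ENNReal.tendsto_toReal (measure_ne_top μ _)).comp h

lemma tendsto_N (μ : Measure ℝ) (hi : Integrable (fun y : ℝ => y) μ) (x : ℝ) :
    Tendsto (fun n : ℕ => Nfun μ (x - 1 / ((n : ℝ) + 1))) atTop (𝓝 (Nfun μ x)) := by
  have h := tendsto_setIntegral_of_antitone (μ := μ) (f := fun y : ℝ => y)
    (s := fun n : ℕ => Ici (x - 1 / ((n : ℝ) + 1)))
    (fun n => measurableSet_Ici) (antitone_Ici x) ⟨0, hi.integrableOn⟩
  rw [iInter_Ici] at h
  exact h.sub tendsto_const_nhds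

lemma cross_key {ρ₁ ρ₂ : Measure ℝ} [IsProbabilityMeasure ρ₁] [IsProbabilityMeasure ρ₂]
    (hi1 : Integrable (fun y : ℝ => y) ρ₁) (hi2 : Integrable (fun y : ℝ => y) ρ₂)
    (hm2 : meanM ρ₂ < 0)
    (hle : ∀ x : ℝ, psiWds ρ₁ x ≤ psiWds ρ₂ x) {x : ℝ} (h1 : (x : EReal) < rSupE ρ₁) :
    Nfun ρ₁ x * Dfun ρ₂ x ≤ Nfun ρ₂ x * Dfun ρ₁ x := by
  rcases lt_trichotomy ((x : EReal)) (rSupE ρ₂) with h2 | h2 | h2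
  · exact cross_of_lt (hle x) h1 h2
  · -- boundary case: approximate from the left
    have hstep : ∀ n : ℕ,
        Nfun ρ₁ (x - 1 / ((n : ℝ) + 1)) * Dfun ρ₂ (x - 1 / ((n : ℝ) + 1)) ≤
        Nfun ρ₂ (x - 1 / ((n : ℝ) + 1)) * Dfun ρ₁ (x - 1 / ((n : ℝ) + 1)) := by
      intro n
      have hxn : x - 1 / ((n : ℝ) + 1) < x := by
        have : (0 : ℝ) < 1 / ((n : ℝ) + 1) := by positivity
        linarith
      have hxn2 : ((x - 1 / ((n : ℝ) + 1) : ℝ) : EReal) < rSupE ρ₂ := by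
        rw [← h2]; exact_mod_cast hxn
      exact cross_of_lt (hle _) (lt_rSup_trans (hle _) hxn2) hxn2
    exact le_of_tendsto_of_tendsto'
      ((tendsto_N ρ₁ hi1 x).mul (tendsto_D ρ₂ x))
      ((tendsto_N ρ₂ hi2 x).mul (tendsto_D ρ₁ x)) hstep
  · have hz : ρ₂ (Ici x) = 0 := null_of_lt h2
    have hD2 : Dfun ρ₂ x = 0 := by simp [Dfun, hz]
    have hN2 : Nfun ρ₂ x = - meanM ρ₂ := by
      unfold Nfun
      rw [Measure.restrict_eq_zero.mpr hz]
      simp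
    rw [hD2, hN2, mul_zero]
    have hd1 := (Dpos (μ := ρ₁) h1).le
    nlinarith

noncomputable def combo (a b : ℝ) (ρ₁ ρ₂ : Measure ℝ) : Measure ℝ :=
  ENNReal.ofReal a • ρ₁ + ENNReal.ofReal b • ρ₂

lemma combo_apply (a b : ℝ) (ρ₁ ρ₂ : Measure ℝ) (s : Set ℝ) :
    combo a b ρ₁ ρ₂ s = ENNReal.ofReal a * ρ₁ s + ENNReal.ofReal b * ρ₂ s := by
  simp [combo, Measure.add_apply, smul_eq_mul]

lemma comboProb {a b : ℝ} (ha : 0 ≤ a) (hb : 0 ≤ b) (hab : a + b = 1)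
    (ρ₁ ρ₂ : Measure ℝ) [IsProbabilityMeasure ρ₁] [IsProbabilityMeasure ρ₂] :
    IsProbabilityMeasure (combo a b ρ₁ ρ₂) := by
  constructor
  rw [combo_apply, measure_univ, measure_univ, mul_one, mul_one,
    ← ENNReal.ofReal_add ha hb, hab, ENNReal.ofReal_one]

lemma comboInt {a b : ℝ} (ρ₁ ρ₂ : Measure ℝ) {f : ℝ → ℝ}
    (h1 : Integrable f ρ₁) (h2 : Integrable f ρ₂) :
    Integrable f (combo a b ρ₁ ρ₂) :=
  (h1.smul_measure ENNReal.ofReal_ne_top).add_measure (h2.smul_measure ENNReal.ofReal_ne_top)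

lemma combo_integral {a b : ℝ} (ha : 0 ≤ a) (hb : 0 ≤ b) (ρ₁ ρ₂ : Measure ℝ) {f : ℝ → ℝ}
    (h1 : Integrable f ρ₁) (h2 : Integrable f ρ₂) :
    ∫ y, f y ∂(combo a b ρ₁ ρ₂) = a * ∫ y, f y ∂ρ₁ + b * ∫ y, f y ∂ρ₂ := by
  rw [combo, integral_add_measure (h1.smul_measure ENNReal.ofReal_ne_top)
      (h2.smul_measure ENNReal.ofReal_ne_top),
    integral_smul_measure, integral_smul_measure,
    ENNReal.toReal_ofReal ha, ENNReal.toReal_ofReal hb]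
  simp [smul_eq_mul]

lemma combo_restrict (a b : ℝ) (ρ₁ ρ₂ : Measure ℝ) (s : Set ℝ) :
    (combo a b ρ₁ ρ₂).restrict s = combo a b (ρ₁.restrict s) (ρ₂.restrict s) := by
  simp [combo, Measure.restrict_add, Measure.restrict_smul]

lemma combo_mean {a b : ℝ} (ha : 0 ≤ a) (hb : 0 ≤ b) (ρ₁ ρ₂ : Measure ℝ)
    (h1 : Integrable (fun y : ℝ => y) ρ₁) (h2 : Integrable (fun y : ℝ => y) ρ₂) :
    meanM (combo a b ρ₁ ρ₂) = a * meanM ρ₁ + b * meanM ρ₂ :=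
  combo_integral ha hb ρ₁ ρ₂ h1 h2

lemma combo_D {a b : ℝ} (ha : 0 ≤ a) (hb : 0 ≤ b) (ρ₁ ρ₂ : Measure ℝ)
    [IsFiniteMeasure ρ₁] [IsFiniteMeasure ρ₂] (x : ℝ) :
    Dfun (combo a b ρ₁ ρ₂) x = a * Dfun ρ₁ x + b * Dfun ρ₂ x := by
  unfold Dfun
  rw [combo_apply, ENNReal.toReal_add, ENNReal.toReal_mul, ENNReal.toReal_mul,
    ENNReal.toReal_ofReal ha, ENNReal.toReal_ofReal hb]
  · exact ENNReal.mul_ne_top ENNReal.ofReal_ne_top (measure_ne_top _ _)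
  · exact ENNReal.mul_ne_top ENNReal.ofReal_ne_top (measure_ne_top _ _)

lemma combo_N {a b : ℝ} (ha : 0 ≤ a) (hb : 0 ≤ b) (ρ₁ ρ₂ : Measure ℝ)
    (h1 : Integrable (fun y : ℝ => y) ρ₁) (h2 : Integrable (fun y : ℝ => y) ρ₂) (x : ℝ) :
    Nfun (combo a b ρ₁ ρ₂) x = a * Nfun ρ₁ x + b * Nfun ρ₂ x := by
  unfold Nfun
  rw [combo_mean ha hb ρ₁ ρ₂ h1 h2]
  have : ∫ y in Ici x, y ∂(combo a b ρ₁ ρ₂)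
      = a * ∫ y in Ici x, y ∂ρ₁ + b * ∫ y in Ici x, y ∂ρ₂ := by
    rw [combo_restrict]
    exact combo_integral ha hb _ _ h1.integrableOn h2.integrableOn
  rw [this]; ring

lemma R1 {a b : ℝ} (ha : 0 < a) {ρ₁ ρ₂ : Measure ℝ} {x : ℝ}
    (h : (x : EReal) < rSupE ρ₁) : (x : EReal) < rSupE (combo a b ρ₁ ρ₂) := by
  refine lt_of_lt_of_le h (sInf_le_sInf ?_)
  rintro _ ⟨z, hz, rfl⟩
  refine ⟨z, ?_, rfl⟩
  simp only [Set.mem_setOf_eq] at hz ⊢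
  rw [combo_apply] at hz
  have h0 := (add_eq_zero.mp hz).1
  rcases mul_eq_zero.mp h0 with h' | h'
  · exact absurd h' (ENNReal.ofReal_pos.mpr ha).ne'
  · exact h'

lemma R1' {a b : ℝ} (hb : 0 < b) {ρ₁ ρ₂ : Measure ℝ} {x : ℝ}
    (h : (x : EReal) < rSupE ρ₂) : (x : EReal) < rSupE (combo a b ρ₁ ρ₂) := by
  refine lt_of_lt_of_le h (sInf_le_sInf ?_)
  rintro _ ⟨z, hz, rfl⟩
  refine ⟨z, ?_, rfl⟩
  simp only [Set.mem_setOf_eq] at hz ⊢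
  rw [combo_apply] at hz
  have h0 := (add_eq_zero.mp hz).2
  rcases mul_eq_zero.mp h0 with h' | h'
  · exact absurd h' (ENNReal.ofReal_pos.mpr hb).ne'
  · exact h'

lemma R2 {a b : ℝ} {ρ₁ ρ₂ : Measure ℝ} {x : ℝ}
    (h1 : ¬ (x : EReal) < rSupE ρ₁) (h2 : ¬ (x : EReal) < rSupE ρ₂)
    (h : (x : EReal) < rSupE (combo a b ρ₁ ρ₂)) : False := by
  push_neg at h1 h2
  obtain ⟨w, hw1, hw2⟩ := exists_between h
  induction w using EReal.rec with
  | bot => exact absurd hw1 (by simp)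
  | coe z =>
      have hz1 : ρ₁ (Ici z) = 0 := null_of_lt (lt_of_le_of_lt h1 hw1)
      have hz2 : ρ₂ (Ici z) = 0 := null_of_lt (lt_of_le_of_lt h2 hw1)
      have : rSupE (combo a b ρ₁ ρ₂) ≤ (z : EReal) :=
        rSup_le_of_null (by rw [combo_apply, hz1, hz2]; simp)
      exact absurd hw2 (not_lt.mpr this)
  | top => exact absurd hw2 (by simp)

lemma comboLe {ρ₁ ρ₂ : Measure ℝ} [IsProbabilityMeasure ρ₁] [IsProbabilityMeasure ρ₂]
    (hi1 : Integrable (fun y : ℝ => y) ρ₁) (hi2 : Integrable (fun y : ℝ => y) ρ₂)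
    (hm2 : meanM ρ₂ < 0)
    (hle : ∀ x : ℝ, psiWds ρ₁ x ≤ psiWds ρ₂ x)
    {a b : ℝ} (ha : 0 ≤ a) (hb : 0 ≤ b) (hab : a + b = 1) (x : ℝ) :
    psiWds ρ₁ x ≤ psiWds (combo a b ρ₁ ρ₂) x ∧
      psiWds (combo a b ρ₁ ρ₂) x ≤ psiWds ρ₂ x := by
  rcases eq_or_lt_of_le ha with ha0 | ha0
  · have : combo a b ρ₁ ρ₂ = ρ₂ := by
      have hb1 : b = 1 := by linarith
      simp [combo, ← ha0, hb1]
    rw [this]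
    exact ⟨hle x, le_refl _⟩
  rcases eq_or_lt_of_le hb with hb0 | hb0
  · have : combo a b ρ₁ ρ₂ = ρ₁ := by
      have ha1 : a = 1 := by linarith
      simp [combo, ← hb0, ha1]
    rw [this]
    exact ⟨le_refl _, hle x⟩
  haveI := comboProb ha hb hab ρ₁ ρ₂
  have hKI : ∀ y : ℝ, (y : EReal) < rSupE ρ₁ →
      Nfun ρ₁ y * Dfun ρ₂ y ≤ Nfun ρ₂ y * Dfun ρ₁ y :=
    fun y hy => cross_key hi1 hi2 hm2 hle hy
  constructor
  · by_cases hν : (x : EReal) < rSupE (combo a b ρ₁ ρ₂)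
    · have hx1 : (x : EReal) < rSupE ρ₁ := by
        by_contra h1
        by_cases h2 : (x : EReal) < rSupE ρ₂
        · exact h1 (lt_rSup_trans (hle x) h2)
        · exact R2 h1 h2 hν
      have d1 := Dpos hx1
      have dν := Dpos hν
      rw [psi_of_lt hx1, psi_of_lt hν, EReal.coe_le_coe_iff]
      rw [combo_N ha hb ρ₁ ρ₂ hi1 hi2]
      rw [combo_D ha hb ρ₁ ρ₂] at dν ⊢
      rw [div_le_div_iff₀ d1 dν]
      have key := hKI x hx1
      nlinarith [mul_le_mul_of_nonneg_left key hb]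
    · rw [psi_of_not_lt hν]; exact le_top
  · by_cases h2 : (x : EReal) < rSupE ρ₂
    · have hx1 : (x : EReal) < rSupE ρ₁ := lt_rSup_trans (hle x) h2
      have hν : (x : EReal) < rSupE (combo a b ρ₁ ρ₂) := R1 ha0 hx1
      have d2 := Dpos h2
      have dν := Dpos hν
      rw [psi_of_lt hν, psi_of_lt h2, EReal.coe_le_coe_iff]
      rw [combo_N ha hb ρ₁ ρ₂ hi1 hi2]
      rw [combo_D ha hb ρ₁ ρ₂] at dν ⊢
      rw [div_le_div_iff₀ dν d2]
      have key := hKI x hx1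
      nlinarith [mul_le_mul_of_nonneg_left key ha]
    · rw [psi_of_not_lt h2]; exact le_top

lemma combo_combo {c a₁ b₁ a₂ b₂ d : ℝ} (hc : 0 ≤ c) (hb₁ : 0 ≤ b₁) (hd : 0 ≤ d)
    (hA : c * a₁ = a₂) (hB : c * b₁ + d = b₂) (ρ₁ ρ₂ : Measure ℝ) :
    combo c d (combo a₁ b₁ ρ₁ ρ₂) ρ₂ = combo a₂ b₂ ρ₁ ρ₂ := by
  simp only [combo, smul_add, smul_smul]
  rw [← ENNReal.ofReal_mul hc, ← ENNReal.ofReal_mul hc, add_assoc, ← add_smul,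
    ← ENNReal.ofReal_add (mul_nonneg hc hb₁) hd, hA, hB]

lemma convex_neg {a b m₁ m₂ : ℝ} (ha : 0 ≤ a) (hb : 0 ≤ b) (hab : a + b = 1)
    (h1 : m₁ < 0) (h2 : m₂ < 0) : a * m₁ + b * m₂ < 0 := by
  rcases eq_or_lt_of_le ha with h | h
  · have hb1 : b = 1 := by linarith
    simp [← h, hb1, h2]
  · nlinarith [mul_pos h (neg_pos.mpr h1), mul_nonneg hb (neg_nonneg.mpr h2.le)]

end WdsAux

open WdsAux in
theorem stmt14 (μ : ℝ → Measure ℝ)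
    (hprob : ∀ t, 0 ≤ t → IsProbabilityMeasure (μ t))
    (hint : ∀ t, 0 ≤ t → Integrable (fun y : ℝ => y) (μ t))
    (hneg : ∀ t, 0 ≤ t → meanM (μ t) < 0)
    (hwds : ∀ s t, 0 ≤ s → s ≤ t → ∀ x : ℝ, psiWds (μ s) x ≤ psiWds (μ t) x)
    (r : ℕ) (hr : 0 < r) (τ : ℕ → ℝ) (hτ0 : 0 ≤ τ 0)
    (hτmono : ∀ i < r, τ i < τ (i + 1))
    (ν : ℝ → Measure ℝ)
    (hν₁ : ∀ t, 0 ≤ t → t ∉ Icc (τ 0) (τ r) → ν t = μ t)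
    (hν₂ : ∀ i < r, ∀ t ∈ Icc (τ i) (τ (i + 1)),
      ν t = ENNReal.ofReal ((τ (i + 1) - t) / (τ (i + 1) - τ i)) • μ (τ i)
        + ENNReal.ofReal ((t - τ i) / (τ (i + 1) - τ i)) • μ (τ (i + 1))) :
    ∀ s t, 0 ≤ s → s ≤ t → ∀ x : ℝ, psiWds (ν s) x ≤ psiWds (ν t) x := by
  -- monotonicity of τ
  have hτle : ∀ j, j ≤ r → ∀ i, i ≤ j → τ i ≤ τ j := by
    intro j
    induction j with
    | zero =>
      intro _ i hi
      have : i = 0 := by omega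
      rw [this]
    | succ n ih =>
      intro hjr i hij
      by_cases hi : i = n + 1
      · rw [hi]
      · exact (ih (by omega) i (by omega)).trans (hτmono n (by omega)).le
  have hτnn : ∀ i, i ≤ r → 0 ≤ τ i := fun i hi => hτ0.trans (hτle i hi 0 (Nat.zero_le _))
  -- the interpolation bounds
  have hP1 : ∀ i, i < r → ∀ t', t' ∈ Icc (τ i) (τ (i + 1)) →
      (∀ x, psiWds (μ (τ i)) x ≤ psiWds (ν t') x) ∧
        (∀ x, psiWds (ν t') x ≤ psiWds (μ (τ (i + 1))) x) := by
    intro i hir t' ht'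
    obtain ⟨ht1, ht2⟩ := ht'
    have hlt := hτmono i hir
    have hdpos : 0 < τ (i + 1) - τ i := by linarith
    have hνt : ν t' = combo ((τ (i + 1) - t') / (τ (i + 1) - τ i))
        ((t' - τ i) / (τ (i + 1) - τ i)) (μ (τ i)) (μ (τ (i + 1))) :=
      hν₂ i hir t' ⟨ht1, ht2⟩
    have ha : 0 ≤ (τ (i + 1) - t') / (τ (i + 1) - τ i) :=
      div_nonneg (by linarith) hdpos.le
    have hb : 0 ≤ (t' - τ i) / (τ (i + 1) - τ i) :=
      div_nonneg (by linarith) hdpos.le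
    have hab : (τ (i + 1) - t') / (τ (i + 1) - τ i) + (t' - τ i) / (τ (i + 1) - τ i) = 1 := by
      field_simp
      ring
    haveI := hprob _ (hτnn i hir.le)
    haveI := hprob _ (hτnn (i + 1) hir)
    have h := fun x => comboLe (hint _ (hτnn i hir.le)) (hint _ (hτnn (i + 1) hir))
      (hneg _ (hτnn (i + 1) hir)) (hwds (τ i) (τ (i + 1)) (hτnn i hir.le) hlt.le)
      ha hb hab x
    exact ⟨fun x => hνt ▸ (h x).1, fun x => hνt ▸ (h x).2⟩
  -- monotonicity inside a single interval
  have hP2 : ∀ i, i < r → ∀ s' t', s' ∈ Icc (τ i) (τ (i + 1)) → t' ∈ Icc (τ i) (τ (i + 1)) →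
      s' ≤ t' → ∀ x, psiWds (ν s') x ≤ psiWds (ν t') x := by
    intro i hir s' t' hs' ht' hst' x
    by_cases hsj : τ (i + 1) ≤ s'
    · have hst : s' = t' := le_antisymm hst' (ht'.2.trans hsj)
      rw [hst]
    · push_neg at hsj
      have hds : 0 < τ (i + 1) - s' := by linarith
      have hdi : 0 < τ (i + 1) - τ i := by linarith [hτmono i hir]
      have hc : 0 ≤ (τ (i + 1) - t') / (τ (i + 1) - s') := div_nonneg (by linarith [ht'.2]) hds.le
      have hd : 0 ≤ (t' - s') / (τ (i + 1) - s') := div_nonneg (by linarith) hds.le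
      have hcd : (τ (i + 1) - t') / (τ (i + 1) - s') + (t' - s') / (τ (i + 1) - s') = 1 := by
        field_simp
        ring
      have ha₁ : 0 ≤ (τ (i + 1) - s') / (τ (i + 1) - τ i) := div_nonneg (by linarith) hdi.le
      have hb₁ : 0 ≤ (s' - τ i) / (τ (i + 1) - τ i) := div_nonneg (by linarith [hs'.1]) hdi.le
      have hab₁ : (τ (i + 1) - s') / (τ (i + 1) - τ i) + (s' - τ i) / (τ (i + 1) - τ i) = 1 := by
        field_simp
        ring
      have hνs : ν s' = combo ((τ (i + 1) - s') / (τ (i + 1) - τ i))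
          ((s' - τ i) / (τ (i + 1) - τ i)) (μ (τ i)) (μ (τ (i + 1))) := hν₂ i hir s' hs'
      have hνt : ν t' = combo ((τ (i + 1) - t') / (τ (i + 1) - τ i))
          ((t' - τ i) / (τ (i + 1) - τ i)) (μ (τ i)) (μ (τ (i + 1))) := hν₂ i hir t' ht'
      have hkey : ν t' = combo ((τ (i + 1) - t') / (τ (i + 1) - s'))
          ((t' - s') / (τ (i + 1) - s')) (ν s') (μ (τ (i + 1))) := by
        rw [hνt, hνs]
        exact (combo_combo hc hb₁ hd (by field_simp) (by field_simp; ring) _ _).symm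
      haveI := hprob _ (hτnn i hir.le)
      haveI := hprob _ (hτnn (i + 1) hir)
      haveI hPs : IsProbabilityMeasure (ν s') := by
        rw [hνs]; exact comboProb ha₁ hb₁ hab₁ _ _
      have hIs : Integrable (fun y : ℝ => y) (ν s') := by
        rw [hνs]; exact comboInt _ _ (hint _ (hτnn i hir.le)) (hint _ (hτnn (i + 1) hir))
      have hMs : meanM (ν s') < 0 := by
        rw [hνs, combo_mean ha₁ hb₁ _ _ (hint _ (hτnn i hir.le)) (hint _ (hτnn (i + 1) hir))]
        exact convex_neg ha₁ hb₁ hab₁ (hneg _ (hτnn i hir.le)) (hneg _ (hτnn (i + 1) hir))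
      have hle' : ∀ y, psiWds (ν s') y ≤ psiWds (μ (τ (i + 1))) y := (hP1 i hir s' hs').2
      have h := comboLe hIs (hint _ (hτnn (i + 1) hir)) (hneg _ (hτnn (i + 1) hir))
        hle' hc hd hcd x
      rw [hkey]
      exact h.1
  -- covering lemma
  have hcover : ∀ u, u ∈ Icc (τ 0) (τ r) → ∃ i, i < r ∧ u ∈ Icc (τ i) (τ (i + 1)) := by
    intro u hu
    have haux : ∀ n, 0 < n → n ≤ r → u ≤ τ n → ∃ i, i < n ∧ τ i ≤ u ∧ u ≤ τ (i + 1) := by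
      intro n
      induction n with
      | zero => intro h; omega
      | succ m ih =>
        intro _ hm hun
        by_cases hc : u ≤ τ m
        · rcases Nat.eq_zero_or_pos m with h0 | h0
          · subst h0
            exact ⟨0, Nat.one_pos, hu.1, hun⟩
          · obtain ⟨i, hi1, hi2⟩ := ih h0 (by omega) hc
            exact ⟨i, by omega, hi2⟩
        · exact ⟨m, by omega, (not_le.mp hc).le, hun⟩
    obtain ⟨i, h1, h2, h3⟩ := haux r hr le_rfl hu.2
    exact ⟨i, h1, h2, h3⟩
  -- main argument
  intro s t hs hst x
  rcases eq_or_lt_of_le hst with rfl | hslt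
  · exact le_refl _
  have ht0 : (0 : ℝ) ≤ t := hs.trans hst
  by_cases hsI : s ∈ Icc (τ 0) (τ r)
  · by_cases htI : t ∈ Icc (τ 0) (τ r)
    · obtain ⟨i, hi, hsi⟩ := hcover s hsI
      obtain ⟨k, hk, htk⟩ := hcover t htI
      rcases lt_trichotomy i k with hik | hik | hik
      · refine le_trans ((hP1 i hi s hsi).2 x) (le_trans ?_ ((hP1 k hk t htk).1 x))
        exact hwds (τ (i + 1)) (τ k) (hτnn _ hi) (hτle k hk.le (i + 1) (by omega)) x
      · subst hik
        exact hP2 i hi s t hsi htk hst x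
      · exfalso
        have := hτle i hi.le (k + 1) (by omega)
        have h1 := hsi.1
        have h2 := htk.2
        linarith
    · have htr : τ r < t := by
        simp only [mem_Icc, not_and, not_le] at htI
        exact htI (hsI.1.trans hst)
      obtain ⟨i, hi, hsi⟩ := hcover s hsI
      refine le_trans ((hP1 i hi s hsi).2 x) ?_
      rw [hν₁ t ht0 (by simp only [mem_Icc, not_and, not_le]; intro _; exact htr)]
      exact hwds (τ (i + 1)) t (hτnn _ hi) ((hτle r le_rfl (i + 1) hi).trans htr.le) x
  · by_cases hs0 : τ 0 ≤ s
    · -- then τ r < s, so both s and t are above τ r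
      have hsr : τ r < s := by
        simp only [mem_Icc, not_and, not_le] at hsI
        exact hsI hs0
      have htI : t ∉ Icc (τ 0) (τ r) := by
        simp only [mem_Icc, not_and, not_le]
        intro _; linarith
      rw [hν₁ s hs hsI, hν₁ t ht0 htI]
      exact hwds s t hs hst x
    · push_neg at hs0
      by_cases htI : t ∈ Icc (τ 0) (τ r)
      · obtain ⟨k, hk, htk⟩ := hcover t htI
        refine le_trans ?_ ((hP1 k hk t htk).1 x)
        rw [hν₁ s hs hsI]
        exact hwds s (τ k) hs (hs0.le.trans (hτle k hk.le 0 (Nat.zero_le _))) x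
      · by_cases ht0' : τ 0 ≤ t
        · -- t ∉ Icc and τ 0 ≤ t means τ r < t, while s < τ 0 : use endpoints
          have htr : τ r < t := by
            simp only [mem_Icc, not_and, not_le] at htI
            exact htI ht0'
          rw [hν₁ s hs hsI, hν₁ t ht0 htI]
          exact hwds s t hs hst x
        · rw [hν₁ s hs hsI, hν₁ t ht0 htI]
          exact hwds s t hs hst x
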